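/- Let 𝒯 be a finite tree, r ∈ V(𝒯), and y : V(𝒯) → ℕ a labeling such that for every v ∈ V(𝒯) the labels along the unique path in 𝒯 from r to v are non-increasing. Then for all u, v ∈ V(𝒯), every vertex w on the unique u–v path in 𝒯 satisfies y(w) ≥ min(y(u), y(v)). -/

import Mathlib

private lemma chain'_le_getLast : ∀ (l : List ℕ), l.Chain' (fun a b => b ≤ a) →
    ∀ x ∈ l, ∀ h : l ≠ [], l.getLast h ≤ x := by
  intro l hl
  induction l with
  | nil => simp
  | cons a t ih =>
    intro x hx h
    cases t with
    | nil => simp at hx; simp [hx]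
    | cons b t' =>
      rw [List.Chain', List.isChain_cons_cons] at hl
      rw [List.getLast_cons (by simp)]
      rcases List.mem_cons.1 hx with rfl | hx'
      · exact le_trans (ih hl.2 b (by simp) (by simp)) hl.1
      · exact ih hl.2 x hx' (by simp)

/-- In a grade-respecting tree rooted at `r` (the labels `y` are non-increasing along the unique
path from `r` to any vertex), every vertex `w` on the unique path between any two vertices
`u` and `v` satisfies `y w ≥ min (y u) (y v)`. -/
theorem grt_path_min_bound {V : Type*} [Fintype V]
    (G : SimpleGraph V) (hG : G.IsTree) (r : V) (y : V → ℕ)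
    (hGRT : ∀ v : V, ∀ p : G.Walk r v, p.IsPath →
      (p.support.map y).Chain' (fun a b => b ≤ a)) :
    ∀ u v : V, ∀ p : G.Walk u v, p.IsPath → ∀ w ∈ p.support, min (y u) (y v) ≤ y w := by
  classical
  intro u v p hp w hw
  -- paths from r to u and r to v
  obtain ⟨σ0⟩ := hG.isConnected.preconnected r u
  obtain ⟨τ0⟩ := hG.isConnected.preconnected r v
  set σ := σ0.bypass with hσdef
  set τ := τ0.bypass with hτdef
  have hσ : σ.IsPath := σ0.bypass_isPath
  have hτ : τ.IsPath := τ0.bypass_isPath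
  -- p is the unique path, and equals the bypass of σ.reverse.append τ
  have hbp : (σ.reverse.append τ).bypass = p := by
    obtain ⟨q, _, huniq⟩ := hG.existsUnique_path u v
    rw [huniq _ (SimpleGraph.Walk.bypass_isPath _), huniq _ hp]
  have hwin : w ∈ σ.support ∨ w ∈ τ.support := by
    have := SimpleGraph.Walk.support_bypass_subset _ (hbp ▸ hw)
    rw [SimpleGraph.Walk.support_append] at this
    rcases List.mem_append.1 this with h | h
    · left; rwa [SimpleGraph.Walk.support_reverse, List.mem_reverse] at h
    · right; exact List.mem_of_mem_tail h
  -- a vertex on a path from r has label ≥ the endpoint's label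
  have key : ∀ (a : V) (ρ : G.Walk r a), ρ.IsPath → w ∈ ρ.support → y a ≤ y w := by
    intro a ρ hρ hwρ
    have hchain := hGRT a ρ hρ
    have hne : (ρ.support.map y) ≠ [] := by simp
    have hlast : (ρ.support.map y).getLast hne = y a := by
      rw [List.getLast_map]
      simp [SimpleGraph.Walk.getLast_support]
    have := chain'_le_getLast _ hchain (y w) (List.mem_map_of_mem (f := y) hwρ) hne
    rwa [hlast] at this
  rcases hwin with h | h
  · exact le_trans (min_le_left _ _) (key u σ hσ h)
  · exact le_trans (min_le_right _ _) (key v τ hτ h)
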